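/- Let G be a group of order 9 acting on ℙ¹ × ℙ¹ × ℙ¹ such that the action is free outside a finite subset and permutes the three factors nontrivially. Then G ≅ ℤ/9ℤ, and there are affine coordinates x, y, z on the three copies of ℙ¹ such that a generator g of G acts by g(x, y, z) = (y, z, ωx), where ω is a primitive third root of unity. -/

import Mathlib

open scoped LinearAlgebra.Projectivization

noncomputable section

/-- The complex projective line `ℙ¹(ℂ)`; the affine coordinate of `(x₀:x₁)` is `x₁/x₀`. -/
abbrev P1 := ℙ ℂ (Fin 2 → ℂ)

/-- The projective transformation of `ℙ¹(ℂ)` induced by a linear automorphism of `ℂ²`. -/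
def projMap (φ : (Fin 2 → ℂ) ≃ₗ[ℂ] (Fin 2 → ℂ)) : P1 → P1 :=
  Projectivization.map φ.toLinearMap φ.injective

/-- The automorphism of `ℙ¹ × ℙ¹ × ℙ¹` that permutes the factors by `τ` and applies the
projective transformation induced by `φ i` on the `i`-th factor (automorphisms of
`(ℙ¹)³` are exactly the maps of this form). -/
def prodAuto (τ : Equiv.Perm (Fin 3))
    (φ : Fin 3 → ((Fin 2 → ℂ) ≃ₗ[ℂ] (Fin 2 → ℂ))) :
    (Fin 3 → P1) → (Fin 3 → P1) :=
  fun x i => projMap (φ (τ.symm i)) (x (τ.symm i))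

/-- The linear automorphism `diag(1, ω)` of `ℂ²`, inducing the affine map `x ↦ ωx`
on `ℙ¹`. -/
def scaleEquiv (ω : ℂˣ) : (Fin 2 → ℂ) ≃ₗ[ℂ] (Fin 2 → ℂ) :=
  LinearEquiv.piCongrRight fun i => LinearEquiv.smulOfUnit (![1, ω] i)

/-- The automorphism `g(x, y, z) = (y, z, ωx)` of `ℙ¹ × ℙ¹ × ℙ¹` (in affine
coordinates). -/
def stdMap (ω : ℂˣ) : (Fin 3 → P1) → (Fin 3 → P1) := fun x =>
  ![x 1, x 2, projMap (scaleEquiv ω) (x 0)]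


section AuxLemmas

abbrev LE2 := (Fin 2 → ℂ) ≃ₗ[ℂ] (Fin 2 → ℂ)

lemma projMap_mk (e : LE2) (v : Fin 2 → ℂ) (hv : v ≠ 0) :
    projMap e (Projectivization.mk ℂ v hv) =
      Projectivization.mk ℂ (e v) (by simpa using hv) := by
  unfold projMap
  rw [Projectivization.map_mk]
  rfl

lemma projMap_comp (e f : LE2) : projMap (e.trans f) = projMap f ∘ projMap e := by
  funext p
  induction p using Projectivization.ind with
  | h v hv => simp [projMap_mk]

lemma projMap_injective (e : LE2) : Function.Injective (projMap e) :=
  Projectivization.map_injective _ _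

lemma projMap_congr_smul (e f : LE2) (d : ℂ) (hd : d ≠ 0) (h : ∀ v, e v = d • f v) :
    projMap e = projMap f := by
  funext p
  induction p using Projectivization.ind with
  | h v hv =>
    rw [projMap_mk, projMap_mk, Projectivization.mk_eq_mk_iff]
    exact ⟨Units.mk0 d hd, by rw [Units.smul_mk0]; exact (h v).symm⟩

lemma projMap_id_of_smul (e : LE2) (d : ℂ) (h : ∀ v, e v = d • v) :
    ∀ p, projMap e p = p := by
  have hd : d ≠ 0 := by
    intro h0
    have h1 := h ![1, 0]
    rw [h0, zero_smul] at h1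
    have h2 : (![1, 0] : Fin 2 → ℂ) ≠ 0 := by
      intro hc; have := congrFun hc 0; simp at this
    exact h2 (e.map_eq_zero_iff.mp h1)
  intro p
  induction p using Projectivization.ind with
  | h v hv =>
    rw [projMap_mk, Projectivization.mk_eq_mk_iff]
    exact ⟨Units.mk0 d hd, by rw [Units.smul_mk0]; exact (h v).symm⟩

lemma exists_smul_of_projMap_id (e : LE2) (h : ∀ p, projMap e p = p) :
    ∃ d : ℂ, ∀ v, e v = d • v := by
  have key : ∀ (v : Fin 2 → ℂ) (hv : v ≠ 0), ∃ a : ℂˣ, e v = (a : ℂ) • v := by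
    intro v hv
    have := h (Projectivization.mk ℂ v hv)
    rw [projMap_mk, Projectivization.mk_eq_mk_iff] at this
    obtain ⟨a, ha⟩ := this
    exact ⟨a, by rw [← ha]; rfl⟩
  have h0 : (![1, 0] : Fin 2 → ℂ) ≠ 0 := by
    intro hc; have := congrFun hc 0; simp at this
  have h1 : (![0, 1] : Fin 2 → ℂ) ≠ 0 := by
    intro hc; have := congrFun hc 1; simp at this
  have h2 : (![1, 1] : Fin 2 → ℂ) ≠ 0 := by
    intro hc; have := congrFun hc 0; simp at this
  obtain ⟨a, ha⟩ := key ![1, 0] h0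
  obtain ⟨b, hb⟩ := key ![0, 1] h1
  obtain ⟨c, hc⟩ := key ![1, 1] h2
  have hsum : (![1, 1] : Fin 2 → ℂ) = ![1, 0] + ![0, 1] := by
    funext i; fin_cases i <;> simp
  have heq : (a : ℂ) • (![1, 0] : Fin 2 → ℂ) + (b : ℂ) • ![0, 1]
      = (c : ℂ) • ![1, 1] := by
    rw [← ha, ← hb, ← hc, hsum, map_add]
  have hac : (a : ℂ) = c := by
    have := congrFun heq 0; simpa using this
  have hbc : (b : ℂ) = c := by
    have := congrFun heq 1; simpa using this
  refine ⟨(a : ℂ), fun v => ?_⟩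
  have hv : v = v 0 • ![1, 0] + v 1 • ![0, 1] := by
    funext i; fin_cases i <;> simp
  calc e v = e (v 0 • ![1, 0] + v 1 • ![0, 1]) := by rw [← hv]
    _ = v 0 • e ![1, 0] + v 1 • e ![0, 1] := by rw [map_add, map_smul, map_smul]
    _ = v 0 • ((a:ℂ) • ![1, 0]) + v 1 • ((b:ℂ) • ![0, 1]) := by rw [ha, hb]
    _ = (a:ℂ) • v := by
        rw [hbc, hac]
        rw [hv]
        simp [smul_smul, smul_add, mul_comm]

lemma infinite_P1 : Infinite P1 := by
  refine Infinite.of_injective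
    (fun t : ℂ => Projectivization.mk ℂ ![t, 1]
      (fun hc => by have := congrFun hc 1; simp at this)) ?_
  intro s t hst
  rw [Projectivization.mk_eq_mk_iff] at hst
  obtain ⟨a, ha⟩ := hst
  have h1 := congrFun ha 1
  have h0 := congrFun ha 0
  simp [Units.smul_def] at h1 h0
  rw [h1] at h0
  simpa using h0.symm

lemma prodAuto_perm_unique {τ σ : Equiv.Perm (Fin 3)}
    {φ χ : Fin 3 → LE2} (h : prodAuto τ φ = prodAuto σ χ) : τ = σ := by
  by_contra hne
  have : ∃ i, τ.symm i ≠ σ.symm i := by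
    by_contra hab
    push_neg at hab
    exact hne (by
      have : τ.symm = σ.symm := Equiv.ext hab
      calc τ = τ.symm.symm := rfl
        _ = σ.symm.symm := by rw [this]
        _ = σ := rfl)
  obtain ⟨i, hi⟩ := this
  set j := τ.symm i with hj
  set k := σ.symm i with hk
  set p : P1 := Projectivization.mk ℂ ![1, 0]
    (fun hc => by have := congrFun hc 0; simp at this) with hp
  set q : P1 := Projectivization.mk ℂ ![0, 1]
    (fun hc => by have := congrFun hc 1; simp at this) with hq
  have hpq : p ≠ q := by
    intro hmk
    rw [hp, hq, Projectivization.mk_eq_mk_iff] at hmk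
    obtain ⟨a, ha⟩ := hmk
    have := congrFun ha 0
    simp [Units.smul_def] at this
  have e1 := congrFun (congrFun h (fun m => if m = j then p else q)) i
  have e2 := congrFun (congrFun h (fun _ => q)) i
  simp only [prodAuto] at e1 e2
  rw [← hj, ← hk] at e1 e2
  rw [if_pos rfl] at e1
  rw [if_neg (fun hc : k = j => hi hc.symm)] at e1
  exact hpq (projMap_injective (φ j) (e1.trans e2.symm))

lemma prodAuto_comp (τ σ : Equiv.Perm (Fin 3)) (φ χ : Fin 3 → LE2) :
    prodAuto τ φ ∘ prodAuto σ χ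
      = prodAuto (τ * σ) (fun j => (χ j).trans (φ (σ j))) := by
  funext x i
  show projMap (φ (τ.symm i)) (prodAuto σ χ x (τ.symm i)) = _
  have h1 : (τ * σ).symm i = σ.symm (τ.symm i) := rfl
  have h2 : σ (σ.symm (τ.symm i)) = τ.symm i := σ.apply_symm_apply _
  simp only [prodAuto, h1, h2, projMap_comp, Function.comp_apply]

lemma prodAuto_one : prodAuto 1 (fun _ => LinearEquiv.refl ℂ (Fin 2 → ℂ)) = id := by
  funext x i
  show projMap (LinearEquiv.refl ℂ _) (x i) = x i
  induction (x i) using Projectivization.ind with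
  | h v hv =>
    rw [projMap_mk, Projectivization.mk_eq_mk_iff]
    exact ⟨1, by simp⟩

lemma scaleEquiv_apply' (ω : ℂˣ) (v : Fin 2 → ℂ) (i : Fin 2) :
    scaleEquiv ω v i = (![1, ω] i : ℂˣ) • v i := rfl

lemma normalize_order_three (N : LE2) (d : ℂ)
    (hd : ∀ v, N (N (N v)) = d • v)
    (hns : ¬ ∃ a : ℂ, ∀ v, N v = a • v) :
    ∃ (P : LE2) (ω : ℂˣ) (α : ℂ), α ≠ 0 ∧ IsPrimitiveRoot (ω : ℂ) 3 ∧
      ∀ v, N (P v) = α • P (scaleEquiv ω v) := by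
  classical
  have hone : (![1, 0] : Fin 2 → ℂ) ≠ 0 := by
    intro hc; have := congrFun hc 0; simp at this
  have hd0 : d ≠ 0 := by
    intro h0
    have h1 := hd ![1, 0]
    rw [h0, zero_smul] at h1
    exact hone (N.map_eq_zero_iff.mp (N.map_eq_zero_iff.mp (N.map_eq_zero_iff.mp h1)))
  -- eigenvector
  obtain ⟨α, hα⟩ := Module.End.exists_eigenvalue (N.toLinearMap : Module.End ℂ (Fin 2 → ℂ))
  obtain ⟨v, hv⟩ := hα.exists_hasEigenvector
  have hNv : N v = α • v := hv.apply_eq_smul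
  have hvne : v ≠ 0 := hv.right
  have hα3 : α ^ 3 = d := by
    have h1 : N (N (N v)) = (α ^ 3) • v := by
      simp only [hNv, map_smul, smul_smul]
      congr 1; ring
    have h2 := (hd v).symm.trans h1
    have := smul_left_injective ℂ hvne h2
    exact this.symm
  have hαne : α ≠ 0 := fun h => hd0 (by rw [← hα3, h]; ring)
  obtain ⟨u, hu⟩ : ∃ u, N u ≠ α • u := by
    by_contra hno; push_neg at hno; exact hns ⟨α, hno⟩
  have hli : LinearIndependent ℂ ![v, u] := by
    rw [LinearIndependent.pair_iff]
    intro s t hst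
    by_cases ht : t = 0
    · subst ht
      rw [zero_smul, add_zero] at hst
      exact ⟨(smul_eq_zero.mp hst).resolve_right hvne, rfl⟩
    · exfalso
      have hu' : u = (t⁻¹ * (-s)) • v := by
        have h' : t • u = (-s) • v := by
          rw [neg_smul]; exact eq_neg_of_add_eq_zero_right hst
        rw [mul_smul, ← h', smul_smul, inv_mul_cancel₀ ht, one_smul]
      apply hu
      rw [hu', map_smul, hNv, smul_smul, smul_smul, mul_comm α]
  -- basis from v, u
  have hb : ∃ b : Module.Basis (Fin 2) ℂ (Fin 2 → ℂ), b 0 = v ∧ b 1 = u := by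
    refine ⟨basisOfLinearIndependentOfCardEqFinrank hli (by simp), ?_, ?_⟩ <;>
      rw [coe_basisOfLinearIndependentOfCardEqFinrank] <;> simp
  obtain ⟨b, hb0, hb1⟩ := hb
  set s : ℂ := b.repr (N u) 0 with hs
  set t : ℂ := b.repr (N u) 1 with ht
  have hNu : N u = s • v + t • u := by
    have h := b.sum_repr (N u)
    rw [Fin.sum_univ_two, hb0, hb1] at h
    exact h.symm
  have hNNu : N (N u) = (s * α + t * s) • v + (t * t) • u := by
    rw [hNu, map_add, map_smul, map_smul, hNv, hNu]
    match_scalars <;> ring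
  have hN3u : N (N (N u)) = (s*α*α + t*s*α + t*t*s) • v + (t*t*t) • u := by
    rw [hNNu, map_add, map_smul, map_smul, hNv, hNu]
    match_scalars <;> ring
  have hco : (s*α*α + t*s*α + t*t*s) = 0 ∧ t*t*t - d = 0 := by
    have h1 : (s*α*α + t*s*α + t*t*s) • v + (t*t*t - d) • u = 0 := by
      have h2 := (hN3u.symm.trans (hd u))
      rw [sub_smul, ← add_sub_assoc, h2, sub_self]
    have h3 := (LinearIndependent.pair_iff.mp hli) _ _ h1
    exact h3
  have ht3 : t * t * t = d := sub_eq_zero.mp hco.2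
  -- t ≠ α
  have htα : t ≠ α := by
    intro he
    have h1 := hco.1
    rw [he] at h1
    have h2 : s * (3 * α * α) = 0 := by linear_combination h1
    have h3 : s = 0 := by
      rcases mul_eq_zero.mp h2 with h | h
      · exact h
      · exfalso
        apply hαne
        have h4 : (3:ℂ) * α * α = 0 := h
        rcases mul_eq_zero.mp h4 with h5 | h5
        · rcases mul_eq_zero.mp h5 with h6 | h6
          · norm_num at h6
          · exact h6
        · exact h5
    apply hu
    rw [hNu, h3, zero_smul, zero_add, he]
  -- the second eigenvector
  set r : ℂ := s / (t - α) with hr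
  set w : Fin 2 → ℂ := u + r • v with hw
  have htαne : t - α ≠ 0 := sub_ne_zero.mpr htα
  have hNw : N w = t • w := by
    rw [hw, map_add, map_smul, hNu, hNv]
    have hkey : s + r * α = t * r := by
      rw [hr]; field_simp; ring
    match_scalars
    · linear_combination hkey
    · ring
  have hwv : LinearIndependent ℂ ![v, w] := by
    rw [LinearIndependent.pair_iff]
    intro a c hac
    have h1 : (a + c * r) • v + c • u = 0 := by
      have hID : (a + c * r) • v + c • u = a • v + c • (u + r • v) := by module
      rw [hID, ← hw]
      exact hac
    obtain ⟨h2, h3⟩ := (LinearIndependent.pair_iff.mp hli) _ _ h1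
    refine ⟨?_, h3⟩
    rw [h3] at h2; simpa using h2
  -- t is nonzero, define omega
  have htne : t ≠ 0 := by
    intro h0; rw [h0] at ht3; simp at ht3; exact hd0 ht3.symm
  set ωc : ℂ := t * α⁻¹ with hωc
  have hω3 : ωc ^ 3 = 1 := by
    have h1 : t ^ 3 = α ^ 3 := by
      rw [hα3, show t ^ 3 = t * t * t from by ring]; exact ht3
    rw [hωc, mul_pow, inv_pow, h1]
    exact mul_inv_cancel₀ (pow_ne_zero 3 hαne)
  have hωne1 : ωc ≠ 1 := by
    intro h1
    apply htα
    rw [hωc] at h1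
    field_simp at h1
    exact h1
  have hωne : ωc ≠ 0 := by
    intro h0; rw [h0] at hω3; norm_num at hω3
  have hord : orderOf ωc = 3 := by
    have h1 : orderOf ωc ∣ 3 := orderOf_dvd_of_pow_eq_one hω3
    have h2 : orderOf ωc ≠ 1 := fun h => hωne1 (orderOf_eq_one_iff.mp h)
    rcases (Nat.prime_three).eq_one_or_self_of_dvd _ h1 with h | h
    · exact absurd h h2
    · exact h
  have hprim : IsPrimitiveRoot ωc 3 := hord ▸ IsPrimitiveRoot.orderOf ωc
  -- basis from v, w
  have hb2 : ∃ b2 : Module.Basis (Fin 2) ℂ (Fin 2 → ℂ), b2 0 = v ∧ b2 1 = w := by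
    refine ⟨basisOfLinearIndependentOfCardEqFinrank hwv (by simp), ?_, ?_⟩ <;>
      rw [coe_basisOfLinearIndependentOfCardEqFinrank] <;> simp
  obtain ⟨b2, hb20, hb21⟩ := hb2
  set ω : ℂˣ := Units.mk0 ωc hωne with hωdef
  set P : LE2 := (Pi.basisFun ℂ (Fin 2)).equiv b2 (Equiv.refl _) with hP
  refine ⟨P, ω, α, hαne, hprim, ?_⟩
  -- prove equality of linear maps on the standard basis
  have hmain : (N.toLinearMap ∘ₗ P.toLinearMap)
      = α • (P.toLinearMap ∘ₗ (scaleEquiv ω).toLinearMap) := by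
    apply (Pi.basisFun ℂ (Fin 2)).ext
    intro i
    have hPapp : ∀ j : Fin 2, P ((Pi.basisFun ℂ (Fin 2)) j) = b2 j := by
      intro j
      rw [hP, Module.Basis.equiv_apply, Equiv.refl_apply]
    have hsc : ∀ j : Fin 2, scaleEquiv ω ((Pi.basisFun ℂ (Fin 2)) j)
        = ((![1, ω] j : ℂˣ) : ℂ) • (Pi.basisFun ℂ (Fin 2)) j := by
      intro j
      funext m
      have h1 : scaleEquiv ω ((Pi.basisFun ℂ (Fin 2)) j) m
          = ((![1, ω] m : ℂˣ) : ℂ) • ((Pi.basisFun ℂ (Fin 2)) j) m := rfl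
      rw [h1]
      by_cases hj : m = j
      · subst hj; rfl
      · have h2 : ((Pi.basisFun ℂ (Fin 2)) j) m = 0 := by
          rw [Pi.basisFun_apply]
          exact Pi.single_eq_of_ne hj 1
        have h3 : (Pi.single j 1 : Fin 2 → ℂ) m = 0 := Pi.single_eq_of_ne hj 1
        simp [h2, Pi.smul_apply, h3]
    simp only [LinearMap.comp_apply, LinearMap.smul_apply, LinearEquiv.coe_coe]
    rw [hsc, map_smul, hPapp]
    fin_cases i
    · show N (b2 0) = α • ((![1, ω] 0 : ℂˣ) : ℂ) • b2 0
      rw [hb20, hNv]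
      norm_num
    · show N (b2 1) = α • ((![1, ω] 1 : ℂˣ) : ℂ) • b2 1
      rw [hb21, hNw, smul_smul]
      congr 1
      have h5 : ((![1, ω] 1 : ℂˣ) : ℂ) = ωc := rfl
      rw [h5, hωc]
      field_simp
  intro z
  have := LinearMap.congr_fun hmain z
  simpa using this

end AuxLemmas

/-- Let `G` be a group of order 9 acting on `ℙ¹ × ℙ¹ × ℙ¹` (by automorphisms, i.e. by
per-factor projective transformations composed with permutations of the factors), such
that the action is free outside a finite subset and permutes the three factors
nontrivially.  Then `G ≅ ℤ/9ℤ`, and there are affine coordinates on the three copies of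
`ℙ¹` (i.e. per-factor changes of coordinates `ψ i`) such that a generator `g` of `G`
acts by `g(x, y, z) = (y, z, ωx)`, where `ω` is a primitive third root of unity. -/
theorem order_nine_action_on_P1_cubed
    (G : Type*) [Group G] (hG : Nat.card G = 9)
    (ρ : G →* Equiv.Perm (Fin 3 → P1))
    -- the action is by automorphisms of `ℙ¹ × ℙ¹ × ℙ¹`
    (hauto : ∀ g : G, ∃ (τ : Equiv.Perm (Fin 3))
      (φ : Fin 3 → ((Fin 2 → ℂ) ≃ₗ[ℂ] (Fin 2 → ℂ))), ⇑(ρ g) = prodAuto τ φ)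
    -- the action permutes the three factors nontrivially
    (hperm : ∃ (g : G) (τ : Equiv.Perm (Fin 3))
      (φ : Fin 3 → ((Fin 2 → ℂ) ≃ₗ[ℂ] (Fin 2 → ℂ))), ⇑(ρ g) = prodAuto τ φ ∧ τ ≠ 1)
    -- the action is free outside a finite subset
    (hfree : ∀ g : G, g ≠ 1 → {x : Fin 3 → P1 | ρ g x = x}.Finite) :
    Nonempty (G ≃* Multiplicative (ZMod 9)) ∧
    ∃ g : G, (∀ h : G, h ∈ Subgroup.zpowers g) ∧
      ∃ (ψ : Fin 3 → ((Fin 2 → ℂ) ≃ₗ[ℂ] (Fin 2 → ℂ))) (ω : ℂˣ),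
        IsPrimitiveRoot (ω : ℂ) 3 ∧
        ∀ x : Fin 3 → P1,
          ρ g (fun i => projMap (ψ i) (x i)) =
            fun i => projMap (ψ i) (stdMap ω x i) := by
  classical
  have hfinG : Finite G := Nat.finite_of_card_ne_zero (by rw [hG]; norm_num)
  have hInfP1 : Infinite P1 := infinite_P1
  choose τf φf hρ using hauto
  have huniq : ∀ (a : G) (τ : Equiv.Perm (Fin 3)) (φ : Fin 3 → LE2),
      ⇑(ρ a) = prodAuto τ φ → τf a = τ := by
    intro a τ φ h
    exact prodAuto_perm_unique ((hρ a).symm.trans h)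
  have hτ1 : τf 1 = 1 := by
    apply huniq 1 1 (fun _ => LinearEquiv.refl ℂ _)
    rw [map_one, prodAuto_one]
    rfl
  have hτmul : ∀ a b : G, τf (a * b) = τf a * τf b := by
    intro a b
    apply huniq _ _ (fun j => ((φf b) j).trans ((φf a) ((τf b) j)))
    rw [map_mul]
    have h1 : ⇑(ρ a * ρ b) = ⇑(ρ a) ∘ ⇑(ρ b) := rfl
    rw [h1, hρ a, hρ b, prodAuto_comp]
  have hτinv : ∀ a : G, τf a⁻¹ = (τf a)⁻¹ := by
    intro a
    have h1 : τf (a⁻¹ * a) = τf a⁻¹ * τf a := hτmul _ _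
    rw [inv_mul_cancel, hτ1] at h1
    exact eq_inv_of_mul_eq_one_left h1.symm
  have hτpow : ∀ (a : G) (n : ℕ), τf (a ^ n) = τf a ^ n := by
    intro a n
    induction n with
    | zero => simpa using hτ1
    | succ k ih => rw [pow_succ, pow_succ, hτmul, ih]
  have h9 : ∀ a : G, a ^ 9 = 1 := by
    intro a
    have := pow_card_eq_one' (G := G) (x := a)
    rwa [hG] at this
  obtain ⟨g0, τ0, φ0, hg0, hτ0⟩ := hperm
  have hτg0 : τf g0 = τ0 := huniq _ _ _ hg0
  have hτ9 : τf g0 ^ 9 = 1 := by rw [← hτpow, h9, hτ1]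
  have hτg0ne : τf g0 ≠ 1 := by rw [hτg0]; exact hτ0
  have hcase : ∀ τ : Equiv.Perm (Fin 3), τ ^ 9 = 1 → τ ≠ 1 →
      τ = (finRotate 3)⁻¹ ∨ τ = finRotate 3 := by
    set_option maxRecDepth 10000 in decide
  obtain ⟨g, hgc⟩ : ∃ g : G, τf g = (finRotate 3)⁻¹ := by
    rcases hcase _ hτ9 hτg0ne with h | h
    · exact ⟨g0, h⟩
    · exact ⟨g0⁻¹, by rw [hτinv, h]⟩
  set c : Equiv.Perm (Fin 3) := (finRotate 3)⁻¹ with hcdef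
  have hgx : ∀ x : Fin 3 → P1, ρ g x
      = fun i => projMap (φf g (c.symm i)) (x (c.symm i)) := by
    intro x
    have h := hρ g
    rw [hgc] at h
    exact congrFun h x
  have hgne : g ≠ 1 := by
    intro h
    rw [h, hτ1] at hgc
    exact (by decide : (1 : Equiv.Perm (Fin 3)) ≠ (finRotate 3)⁻¹) hgc
  set F : Fin 3 → P1 → P1 := fun j => projMap (φf g j) with hF
  have hcs0 : c.symm 0 = 1 := by decide
  have hcs1 : c.symm 1 = 2 := by decide
  have hcs2 : c.symm 2 = 0 := by decide
  have hcube : ∀ x : Fin 3 → P1, ρ (g ^ 3) x = ρ g (ρ g (ρ g x)) := by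
    intro x
    rw [show g ^ 3 = g * (g * g) from by rw [pow_succ', pow_succ', pow_one], map_mul, map_mul]
    rfl
  have hcomp : ∀ (x : Fin 3 → P1) (i : Fin 3),
      ρ g x i = F (c.symm i) (x (c.symm i)) := fun x i => congrFun (hgx x) i
  have h3c : ∀ x : Fin 3 → P1,
      ρ (g ^ 3) x 0 = F 1 (F 2 (F 0 (x 0)))
      ∧ ρ (g ^ 3) x 1 = F 2 (F 0 (F 1 (x 1)))
      ∧ ρ (g ^ 3) x 2 = F 0 (F 1 (F 2 (x 2))) := by
    intro x
    refine ⟨?_, ?_, ?_⟩ <;> rw [hcube]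
    · rw [hcomp, hcs0, hcomp, hcs1, hcomp, hcs2]
    · rw [hcomp, hcs1, hcomp, hcs2, hcomp, hcs0]
    · rw [hcomp, hcs2, hcomp, hcs0, hcomp, hcs1]
  have hg3 : g ^ 3 ≠ 1 := by
    intro h3
    have hid : ∀ x : Fin 3 → P1, ρ (g ^ 3) x = x := by
      intro x; rw [h3, map_one]; rfl
    have key : ∀ p : P1, F 0 (F 1 (F 2 p)) = p := by
      intro p
      have h1 := ((h3c (fun _ => p)).2.2).symm.trans (congrFun (hid (fun _ => p)) 2)
      exact h1
    have hinf : {x : Fin 3 → P1 | ρ g x = x}.Infinite := by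
      refine Set.infinite_of_injective_forall_mem
        (f := fun p : P1 => (![F 1 (F 2 p), F 2 p, p] : Fin 3 → P1)) ?_ ?_
      · intro p q hpq
        have := congrFun hpq 2
        simpa using this
      · intro p
        show ρ g _ = _
        funext i
        fin_cases i
        · show ρ g (![F 1 (F 2 p), F 2 p, p]) 0 = F 1 (F 2 p)
          rw [hcomp, hcs0]; simp
        · show ρ g (![F 1 (F 2 p), F 2 p, p]) 1 = F 2 p
          rw [hcomp, hcs1]; simp
        · show ρ g (![F 1 (F 2 p), F 2 p, p]) 2 = p
          rw [hcomp, hcs2]; simp [key]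
    exact hinf (hfree g hgne)
  have hord : orderOf g = 9 := by
    have hdvd : orderOf g ∣ 9 := orderOf_dvd_of_pow_eq_one (h9 g)
    have hmem : orderOf g ∈ Nat.divisors 9 := Nat.mem_divisors.mpr ⟨hdvd, by norm_num⟩
    have hdiv : Nat.divisors 9 = {1, 3, 9} := by decide
    rw [hdiv] at hmem
    simp only [Finset.mem_insert, Finset.mem_singleton] at hmem
    rcases hmem with h | h | h
    · exact absurd (orderOf_eq_one_iff.mp h) hgne
    · exfalso; apply hg3; rw [← h]; exact pow_orderOf_eq_one g
    · exact h
  have hgen : ∀ h : G, h ∈ Subgroup.zpowers g := by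
    have htop : Subgroup.zpowers g = ⊤ := by
      apply Subgroup.eq_top_of_card_eq
      rw [Nat.card_zpowers, hord, hG]
    intro h; rw [htop]; exact Subgroup.mem_top h
  have hcyc : IsCyclic G := ⟨⟨g, hgen⟩⟩
  constructor
  · exact hG ▸ ⟨(zmodCyclicMulEquiv hcyc).symm⟩
  refine ⟨g, hgen, ?_⟩
  set A : LE2 := φf g 1 with hA
  set B : LE2 := φf g 2 with hB
  set C : LE2 := φf g 0 with hC
  set N : LE2 := (C.trans B).trans A with hNdef
  have hprojN : ∀ p : P1, projMap N p = F 1 (F 2 (F 0 p)) := by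
    intro p
    rw [hNdef, projMap_comp, projMap_comp]
    rfl
  have hX0 : ∀ x : Fin 3 → P1, ρ (g ^ 3) x 0 = projMap N (x 0) := by
    intro x
    rw [(h3c x).1]
    exact (hprojN (x 0)).symm
  have hN3 : ∀ p : P1, projMap N (projMap N (projMap N p)) = p := by
    intro p
    have h99 : ρ (g ^ 9) = 1 := by rw [h9 g, map_one]
    have e9 : ρ (g ^ 9) (fun _ => p) = ρ (g ^ 3) (ρ (g ^ 3) (ρ (g ^ 3) (fun _ => p))) := by
      rw [show g ^ 9 = g ^ 3 * (g ^ 3 * g ^ 3) from by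
        rw [show (9:ℕ) = 3 + (3 + 3) from rfl, pow_add, pow_add],
        map_mul, map_mul]
      rfl
    have h1 : ρ (g ^ 9) (fun _ => p) 0 = projMap N (projMap N (projMap N p)) := by
      rw [e9, hX0, hX0, hX0]
    rw [h99] at h1
    exact h1.symm
  have hNns : ¬ ∃ a : ℂ, ∀ v, N v = a • v := by
    rintro ⟨a, ha⟩
    have hid := projMap_id_of_smul N a ha
    have h120 : ∀ p, F 1 (F 2 (F 0 p)) = p := fun p => by rw [← hprojN]; exact hid p
    have hinj : ∀ j : Fin 3, Function.Injective (F j) := fun j => projMap_injective _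
    have h201 : ∀ p, F 2 (F 0 (F 1 p)) = p := fun p => hinj 1 (h120 (F 1 p))
    have h012 : ∀ p, F 0 (F 1 (F 2 p)) = p := fun p => hinj 2 (h201 (F 2 p))
    have hfix : ∀ x : Fin 3 → P1, ρ (g ^ 3) x = x := by
      intro x
      funext i
      fin_cases i
      · show ρ (g ^ 3) x 0 = x 0
        rw [(h3c x).1]; exact h120 _
      · show ρ (g ^ 3) x 1 = x 1
        rw [(h3c x).2.1]; exact h201 _
      · show ρ (g ^ 3) x 2 = x 2
        rw [(h3c x).2.2]; exact h012 _
    have hinf : {x : Fin 3 → P1 | ρ (g ^ 3) x = x}.Infinite := by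
      refine Set.infinite_of_injective_forall_mem (f := fun p : P1 => fun _ => p) ?_ ?_
      · intro p q hpq; exact congrFun hpq 0
      · intro p; exact hfix _
    exact hinf (hfree (g ^ 3) hg3)
  obtain ⟨d, hd⟩ := exists_smul_of_projMap_id ((N.trans N).trans N)
    (fun p => by
      rw [projMap_comp (N.trans N) N, projMap_comp N N]
      exact hN3 p)
  obtain ⟨P, ω, α, hαne, hprim, hmain⟩ := normalize_order_three N d (fun v => hd v) hNns
  refine ⟨![P, P.trans A.symm, (P.trans A.symm).trans B.symm], ω, hprim, ?_⟩
  intro x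
  rw [hgx]
  have hψ1 : ∀ q : P1, projMap A (projMap (P.trans A.symm) q) = projMap P q := by
    intro q
    have h1 : (P.trans A.symm).trans A = P := by
      apply LinearEquiv.toLinearMap_injective
      ext v
      simp
    rw [← Function.comp_apply (f := projMap A), ← projMap_comp, h1]
  have hψ2 : ∀ q : P1,
      projMap B (projMap ((P.trans A.symm).trans B.symm) q)
        = projMap (P.trans A.symm) q := by
    intro q
    have h1 : ((P.trans A.symm).trans B.symm).trans B = P.trans A.symm := by
      apply LinearEquiv.toLinearMap_injective
      ext v
      simp
    rw [← Function.comp_apply (f := projMap B), ← projMap_comp, h1]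
  have hψ0 : ∀ q : P1,
      projMap C (projMap P q)
        = projMap ((P.trans A.symm).trans B.symm) (projMap (scaleEquiv ω) q) := by
    intro q
    have h1 : projMap (P.trans C)
        = projMap ((scaleEquiv ω).trans ((P.trans A.symm).trans B.symm)) := by
      apply projMap_congr_smul _ _ α hαne
      intro v
      have h2 : C (P v) = B.symm (A.symm (N (P v))) := by
        rw [hNdef]
        simp [LinearEquiv.trans_apply, LinearEquiv.symm_apply_apply]
      show C (P v) = α • B.symm (A.symm (P (scaleEquiv ω v)))
      rw [h2, hmain v, map_smul, map_smul]
    have h3 := congrFun h1 q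
    rw [projMap_comp, projMap_comp] at h3
    exact h3
  funext i
  fin_cases i
  · show projMap (φf g (c.symm 0)) _ = _
    rw [hcs0]
    exact hψ1 (x 1)
  · show projMap (φf g (c.symm 1)) _ = _
    rw [hcs1]
    exact hψ2 (x 2)
  · show projMap (φf g (c.symm 2)) _ = _
    rw [hcs2]
    exact hψ0 (x 0)

end
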